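/- Let F be an anonymous, neutral, and consistent social choice function on approval profiles where each ballot has fixed size k over a candidate set B. For every profile A and candidates a, b ∈ B with equal approval scores s(A,a) = s(A,b), it holds that a ∈ F(A) if and only if b ∈ F(A). -/

import Mathlib

open Finset
open scoped Classical

structure Profile (C : Type) where
  voters : Finset ℕ
  ballot : ℕ → Finset C

namespace Profile

variable {C : Type}

def combine (A B : Profile C) : Profile C :=
  ⟨A.voters ∪ B.voters, fun i => if i ∈ A.voters then A.ballot i else B.ballot i⟩

def Disj (A B : Profile C) : Prop := Disjoint A.voters B.voters

def permVoters (π : Equiv.Perm ℕ) (A : Profile C) : Profile C :=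
  ⟨A.voters.map π.toEmbedding, fun i => A.ballot (π.symm i)⟩

def mapCand [DecidableEq C] (τ : Equiv.Perm C) (A : Profile C) : Profile C :=
  ⟨A.voters, fun i => (A.ballot i).image τ⟩

end Profile

variable {C : Type} [Fintype C] [DecidableEq C]

/-- A valid profile for committee-size-`k` ballots: a nonempty electorate in which every
voter approves exactly `k` candidates. -/
def Valid (k : ℕ) (A : Profile C) : Prop :=
  A.voters.Nonempty ∧ ∀ i ∈ A.voters, (A.ballot i).card = k

/-- The approval score of candidate `c` in profile `A`. -/
def appScore (A : Profile C) (c : C) : ℕ :=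
  (A.voters.filter fun i => c ∈ A.ballot i).card

/-- Approval voting: the candidates with maximal approval score. -/
def AV (A : Profile C) : Finset C :=
  univ.filter fun c => ∀ d, appScore A d ≤ appScore A c

/-- Anti-approval voting: the candidates with minimal approval score. -/
def antiAV (A : Profile C) : Finset C :=
  univ.filter fun c => ∀ d, appScore A c ≤ appScore A d

set_option linter.unusedSectionVars false
set_option maxHeartbeats 1000000

namespace ESET
open Equiv

variable {C : Type} [Fintype C] [DecidableEq C]

lemma profile_ext {X Y : Profile C} (h1 : X.voters = Y.voters) (h2 : X.ballot = Y.ballot) :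
    X = Y := by cases X; cases Y; simp_all

lemma image_mul (σ γ : Equiv.Perm C) (S : Finset C) :
    S.image ⇑(σ * γ) = (S.image ⇑γ).image ⇑σ := by
  rw [Finset.image_image]; rfl

lemma image_inv_eq {σ : Equiv.Perm C} {S T : Finset C} (h : S.image ⇑σ = T) :
    T.image ⇑σ⁻¹ = S := by
  subst h; rw [Finset.image_image]
  have : (⇑σ⁻¹ ∘ ⇑σ) = id := by funext x; simp
  rw [this, Finset.image_id]

lemma image_swap_mem {S : Finset C} {a b : C} (ha : a ∈ S) (hb : b ∈ S) :
    S.image ⇑(Equiv.swap a b) = S := by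
  ext x; simp only [Finset.mem_image]
  constructor
  · rintro ⟨y, hy, rfl⟩
    rcases eq_or_ne y a with rfl | h1
    · simpa [Equiv.swap_apply_left] using hb
    rcases eq_or_ne y b with rfl | h2
    · simpa [Equiv.swap_apply_right] using ha
    · rwa [Equiv.swap_apply_of_ne_of_ne h1 h2]
  · intro hx
    rcases eq_or_ne x a with rfl | h1
    · exact ⟨b, hb, Equiv.swap_apply_right _ _⟩
    rcases eq_or_ne x b with rfl | h2
    · exact ⟨a, ha, Equiv.swap_apply_left _ _⟩
    · exact ⟨x, hx, Equiv.swap_apply_of_ne_of_ne h1 h2⟩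

lemma image_swap_not_mem {S : Finset C} {a b : C} (ha : a ∉ S) (hb : b ∉ S) :
    S.image ⇑(Equiv.swap a b) = S := by
  have : ∀ x ∈ S, Equiv.swap a b x = id x := by
    intro x hx
    exact Equiv.swap_apply_of_ne_of_ne (fun h => ha (h ▸ hx)) (fun h => hb (h ▸ hx))
  rw [Finset.image_congr this, Finset.image_id]

lemma image_swap_insert {x y : C} {U : Finset C} (hx : x ∈ U) (hy : y ∉ U) :
    U.image ⇑(Equiv.swap x y) = insert y (U.erase x) := by
  ext z; simp only [Finset.mem_image, Finset.mem_insert, Finset.mem_erase]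
  constructor
  · rintro ⟨w, hw, rfl⟩
    rcases eq_or_ne w x with rfl | h1
    · left; exact Equiv.swap_apply_left _ _
    rcases eq_or_ne w y with rfl | h2
    · exact absurd hw hy
    · rw [Equiv.swap_apply_of_ne_of_ne h1 h2]; right; exact ⟨h1, hw⟩
  · rintro (rfl | ⟨hz, hzU⟩)
    · exact ⟨x, hx, Equiv.swap_apply_left _ _⟩
    · refine ⟨z, hzU, ?_⟩
      exact Equiv.swap_apply_of_ne_of_ne hz (fun h => hy (h ▸ hzU))

lemma exists_perm_fix (a b : C) :
    ∀ (n : ℕ) (U V : Finset C), (U \ V).card ≤ n → U.card = V.card →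
      a ∈ U → a ∈ V → b ∉ U → b ∉ V →
      ∃ δ : Equiv.Perm C, δ a = a ∧ δ b = b ∧ U.image ⇑δ = V := by
  intro n
  induction n with
  | zero =>
    intro U V h hc haU haV hbU hbV
    have h0 : (U \ V) = ∅ := Finset.card_eq_zero.mp (Nat.le_antisymm h (Nat.zero_le _))
    have hUV : U ⊆ V := Finset.sdiff_eq_empty_iff_subset.mp h0
    have : U = V := Finset.eq_of_subset_of_card_le hUV hc.ge
    subst this
    exact ⟨1, rfl, rfl, by simp⟩
  | succ n ih =>
    intro U V h hc haU haV hbU hbV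
    by_cases hUV : U = V
    · subst hUV; exact ⟨1, rfl, rfl, by simp⟩
    · have hne : (U \ V).Nonempty := by
        rw [Finset.nonempty_iff_ne_empty]
        intro hemp
        exact hUV (Finset.eq_of_subset_of_card_le (Finset.sdiff_eq_empty_iff_subset.mp hemp) hc.ge)
      have hne2 : (V \ U).Nonempty := by
        rw [Finset.nonempty_iff_ne_empty]
        intro hemp
        exact hUV (Finset.eq_of_subset_of_card_le (Finset.sdiff_eq_empty_iff_subset.mp hemp) hc.le).symm
      obtain ⟨x, hx⟩ := hne
      obtain ⟨y, hy⟩ := hne2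
      rw [Finset.mem_sdiff] at hx hy
      have hxa : x ≠ a := fun h' => hx.2 (h' ▸ haV)
      have hxb : x ≠ b := fun h' => hbU (h' ▸ hx.1)
      have hya : y ≠ a := fun h' => hy.2 (h' ▸ haU)
      have hyb : y ≠ b := fun h' => hbV (h' ▸ hy.1)
      have hyU : y ∉ U := hy.2
      set U' := insert y (U.erase x) with hU'
      have haU' : a ∈ U' := by
        simp only [hU', Finset.mem_insert, Finset.mem_erase]
        right; exact ⟨fun h' => hxa h'.symm, haU⟩
      have hbU' : b ∉ U' := by
        simp only [hU', Finset.mem_insert, Finset.mem_erase]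
        rintro (rfl | ⟨_, hbU2⟩)
        · exact hyb rfl
        · exact hbU hbU2
      have hcard : U'.card = V.card := by
        rw [hU', Finset.card_insert_of_notMem (fun h' => hyU (Finset.mem_of_mem_erase h')),
          Finset.card_erase_of_mem hx.1]
        have : 1 ≤ U.card := Finset.card_pos.mpr ⟨x, hx.1⟩
        omega
      have hsd : U' \ V = (U \ V).erase x := by
        rw [hU']
        ext z
        simp only [Finset.mem_sdiff, Finset.mem_insert, Finset.mem_erase]
        constructor
        · rintro ⟨rfl | ⟨hzx, hzU⟩, hzV⟩
          · exact absurd hy.1 hzV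
          · exact ⟨hzx, hzU, hzV⟩
        · rintro ⟨hzx, hzU, hzV⟩
          exact ⟨Or.inr ⟨hzx, hzU⟩, hzV⟩
      have hsdc : (U' \ V).card ≤ n := by
        rw [hsd, Finset.card_erase_of_mem (Finset.mem_sdiff.mpr hx)]
        omega
      obtain ⟨δ, hδa, hδb, hδim⟩ := ih U' V hsdc hcard haU' haV hbU' hbV
      refine ⟨δ * Equiv.swap x y, ?_, ?_, ?_⟩
      · rw [Equiv.Perm.mul_apply, Equiv.swap_apply_of_ne_of_ne (Ne.symm hxa) (Ne.symm hya), hδa]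
      · rw [Equiv.Perm.mul_apply, Equiv.swap_apply_of_ne_of_ne (Ne.symm hxb) (Ne.symm hyb), hδb]
      · rw [image_mul, image_swap_insert hx.1 hyU, hδim]


open Equiv
variable {C : Type} [Fintype C] [DecidableEq C]

/-- swap of the blocks `[0,N)` and `[i*N, i*N+N)` of `ℕ`. -/
def bswapFun (N i x : ℕ) : ℕ :=
  if x < N then x + i * N else if i * N ≤ x ∧ x < i * N + N then x - i * N else x

lemma bswap_invol (N i : ℕ) : Function.Involutive (bswapFun N i) := by
  intro x
  have hM : i * N = 0 ∨ N ≤ i * N := by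
    rcases Nat.eq_zero_or_pos i with h | h
    · left; simp [h]
    · right; exact Nat.le_mul_of_pos_left N h
  unfold bswapFun
  split_ifs <;> omega

noncomputable def bswap (N i : ℕ) : Equiv.Perm ℕ :=
  Function.Involutive.toPerm _ (bswap_invol N i)

lemma bswap_apply (N i x : ℕ) : bswap N i x = bswapFun N i x := rfl
lemma bswap_symm_apply (N i x : ℕ) : (bswap N i).symm x = bswapFun N i x := rfl

lemma bswapFun_lt {N : ℕ} (i : ℕ) {v : ℕ} (hv : v < N) : bswapFun N i v = v + i * N := by
  unfold bswapFun; rw [if_pos hv]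

lemma bswapFun_block {N : ℕ} (i : ℕ) {v : ℕ} (hv : v < N) : bswapFun N i (v + i * N) = v := by
  have hM : i * N = 0 ∨ N ≤ i * N := by
    rcases Nat.eq_zero_or_pos i with h | h
    · left; simp [h]
    · right; exact Nat.le_mul_of_pos_left N h
  unfold bswapFun
  split_ifs <;> omega

lemma valid_permVoters {k : ℕ} {A : Profile C} (h : Valid k A) (π : Equiv.Perm ℕ) :
    Valid k (Profile.permVoters π A) := by
  obtain ⟨h1, h2⟩ := h
  constructor
  · exact h1.map
  · intro i hi
    rw [Profile.permVoters, Finset.mem_map_equiv] at hi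
    exact h2 _ hi

lemma valid_mapCand {k : ℕ} {A : Profile C} (h : Valid k A) (σ : Equiv.Perm C) :
    Valid k (Profile.mapCand σ A) := by
  obtain ⟨h1, h2⟩ := h
  refine ⟨h1, fun i hi => ?_⟩
  rw [Profile.mapCand]
  simp only
  rw [Finset.card_image_of_injective _ σ.injective]
  exact h2 i hi

lemma valid_combine {k : ℕ} {A B : Profile C} (hA : Valid k A) (hB : Valid k B) :
    Valid k (A.combine B) := by
  obtain ⟨h1, h2⟩ := hA
  obtain ⟨h3, h4⟩ := hB
  constructor
  · obtain ⟨x, hx⟩ := h1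
    exact ⟨x, Finset.mem_union_left _ hx⟩
  · intro i hi
    rw [Profile.combine] at hi ⊢
    simp only [Finset.mem_union] at hi
    by_cases hiA : i ∈ A.voters
    · simp only [if_pos hiA]; exact h2 i hiA
    · simp only [if_neg hiA]; exact h4 i (hi.resolve_left hiA)

-- ### constants and the symmetric profile Zp
noncomputable def NN (A : Profile C) : ℕ := A.voters.sup id + 1

lemma NN_pos (A : Profile C) : 0 < NN A := Nat.succ_pos _

lemma voters_lt_NN {A : Profile C} {v : ℕ} (hv : v ∈ A.voters) : v < NN A :=
  Nat.lt_succ_of_le (Finset.le_sup (f := id) hv)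

noncomputable def Hs (a b : C) : Finset (Equiv.Perm C) :=
  univ.filter fun σ => σ a = a ∧ σ b = b

noncomputable def HL (a b : C) : List (Equiv.Perm C) := (Hs a b).toList
noncomputable def hh (a b : C) : ℕ := (HL a b).length
noncomputable def g (a b : C) (i : ℕ) : Equiv.Perm C := (HL a b).getD i 1
noncomputable def idx (a b : C) (σ : Equiv.Perm C) : ℕ := (HL a b).idxOf σ

lemma mem_HL {a b : C} {σ : Equiv.Perm C} : σ ∈ HL a b ↔ (σ a = a ∧ σ b = b) := by
  rw [HL, Finset.mem_toList, Hs, Finset.mem_filter]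
  simp

lemma HL_nodup (a b : C) : (HL a b).Nodup := Finset.nodup_toList _

lemma one_mem_HL (a b : C) : (1 : Equiv.Perm C) ∈ HL a b := mem_HL.mpr ⟨rfl, rfl⟩

lemma hh_pos (a b : C) : 0 < hh a b :=
  List.length_pos_iff.mpr (List.ne_nil_of_mem (one_mem_HL a b))

lemma g_mem {a b : C} {i : ℕ} (hi : i < hh a b) : g a b i ∈ HL a b := by
  rw [g, List.getD_eq_getElem _ _ hi]
  exact List.getElem_mem _

lemma g_fix {a b : C} {i : ℕ} (hi : i < hh a b) : g a b i a = a ∧ g a b i b = b :=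
  mem_HL.mp (g_mem hi)

lemma idx_lt {a b : C} {σ : Equiv.Perm C} (h : σ ∈ HL a b) : idx a b σ < hh a b :=
  List.idxOf_lt_length_iff.mpr h

lemma g_idx {a b : C} {σ : Equiv.Perm C} (h : σ ∈ HL a b) : g a b (idx a b σ) = σ := by
  rw [g, List.getD_eq_getElem _ _ (idx_lt h)]
  exact List.getElem_idxOf _

lemma idx_g {a b : C} {i : ℕ} (hi : i < hh a b) : idx a b (g a b i) = i := by
  rw [g, List.getD_eq_getElem _ _ hi]
  exact (HL_nodup a b).idxOf_getElem _ _

noncomputable def KS (k : ℕ) : Finset (Finset C) := univ.filter fun S => S.card = k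
noncomputable def mm (k : ℕ) : ℕ := (KS (C := C) k).card

lemma mm_pos {k : ℕ} (hk : k ≤ Fintype.card C) : 0 < mm (C := C) k := by
  rw [mm, Finset.card_pos]
  obtain ⟨t, _, ht⟩ := Finset.exists_subset_card_eq (s := (univ : Finset C)) (n := k) (by simpa using hk)
  exact ⟨t, by simp [KS, ht]⟩

noncomputable def ee (k : ℕ) : Fin (mm (C := C) k) ≃ {S // S ∈ KS (C := C) k} :=
  (KS (C := C) k).equivFin.symm

lemma ee_card {k : ℕ} (x : Fin (mm (C := C) k)) : ((ee k x : {S // S ∈ KS (C := C) k}) : Finset C).card = k := by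
  have := (ee k x).2
  simp only [KS, Finset.mem_filter, Finset.mem_univ, true_and] at this
  exact this

noncomputable def KK (A : Profile C) (a b : C) : ℕ := hh a b * NN A + 1

lemma KK_pos (A : Profile C) (a b : C) : 0 < KK A a b := Nat.succ_pos _

lemma hN_lt_KK (A : Profile C) (a b : C) : hh a b * NN A < KK A a b := Nat.lt_succ_self _

noncomputable def pat (k : ℕ) (A : Profile C) (a b : C) (n : ℕ) : Finset C :=
  if hm : 0 < mm (C := C) k then
    ((ee k ⟨n / KK A a b % mm (C := C) k, Nat.mod_lt _ hm⟩ : {S // S ∈ KS (C := C) k}) : Finset C)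
  else ∅

lemma pat_eq {k : ℕ} {A : Profile C} {a b : C} (n : ℕ) (hm : 0 < mm (C := C) k) :
    pat k A a b n = ((ee k ⟨n / KK A a b % mm (C := C) k, Nat.mod_lt _ hm⟩ : {S // S ∈ KS (C := C) k}) : Finset C) :=
  dif_pos hm

lemma pat_card {k : ℕ} {A : Profile C} {a b : C} (n : ℕ) (hm : 0 < mm (C := C) k) :
    (pat k A a b n).card = k := by
  rw [pat_eq n hm]; exact ee_card _

noncomputable def sstar (k : ℕ) (σ : Equiv.Perm C) (j : ℕ) : ℕ :=
  if hj : j < mm (C := C) k then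
    ((ee k).symm ⟨((ee k ⟨j, hj⟩ : {S // S ∈ KS (C := C) k}) : Finset C).image ⇑σ, by
      have := (ee k ⟨j, hj⟩).2
      simp only [KS, Finset.mem_filter, Finset.mem_univ, true_and] at this ⊢
      
      rw [Finset.card_image_of_injective _ σ.injective]
      exact this⟩ : Fin (mm (C := C) k)).1
  else j

lemma sstar_lt {k : ℕ} (σ : Equiv.Perm C) {j : ℕ} (hj : j < mm (C := C) k) :
    sstar k σ j < mm (C := C) k := by
  rw [sstar, dif_pos hj]
  exact (((ee k).symm _ : Fin (mm (C := C) k))).isLt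

lemma sstar_not_lt {k : ℕ} (σ : Equiv.Perm C) {j : ℕ} (hj : ¬ j < mm (C := C) k) :
    sstar k σ j = j := dif_neg hj

lemma ee_sstar {k : ℕ} (σ : Equiv.Perm C) {j : ℕ} (hj : j < mm (C := C) k) :
    ((ee k ⟨sstar k σ j, sstar_lt σ hj⟩ : {S // S ∈ KS (C := C) k}) : Finset C)
      = ((ee k ⟨j, hj⟩ : {S // S ∈ KS (C := C) k}) : Finset C).image ⇑σ := by
  have h1 : (⟨sstar k σ j, sstar_lt σ hj⟩ : Fin (mm (C := C) k)) =
      (ee k).symm ⟨((ee k ⟨j, hj⟩ : {S // S ∈ KS (C := C) k}) : Finset C).image ⇑σ, by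
        have := (ee k ⟨j, hj⟩).2
        simp only [KS, Finset.mem_filter, Finset.mem_univ, true_and] at this ⊢
        
        rw [Finset.card_image_of_injective _ σ.injective]
        exact this⟩ := by
    apply Fin.ext
    simp only [sstar, dif_pos hj]
  rw [h1, Equiv.apply_symm_apply]

lemma sstar_sstar {k : ℕ} (σ : Equiv.Perm C) (j : ℕ) :
    sstar k σ⁻¹ (sstar k σ j) = j := by
  by_cases hj : j < mm (C := C) k
  · have h1 : sstar k σ j < mm (C := C) k := sstar_lt σ hj
    rw [sstar, dif_pos h1]
    have e2 : ((ee k ⟨sstar k σ j, h1⟩ : {S // S ∈ KS (C := C) k}) : Finset C).image ⇑σ⁻¹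
        = ((ee k ⟨j, hj⟩ : {S // S ∈ KS (C := C) k}) : Finset C) := by
      rw [ee_sstar σ hj]
      exact image_inv_eq rfl
    have e3 : (⟨((ee k ⟨sstar k σ j, h1⟩ : {S // S ∈ KS (C := C) k}) : Finset C).image ⇑σ⁻¹, by
        have := (ee k ⟨sstar k σ j, h1⟩).2
        simp only [KS, Finset.mem_filter, Finset.mem_univ, true_and] at this ⊢
        
        rw [Finset.card_image_of_injective _ σ⁻¹.injective]
        exact this⟩ : {S // S ∈ KS (C := C) k}) = ee k ⟨j, hj⟩ := Subtype.ext e2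
    rw [e3, Equiv.symm_apply_apply]
  · rw [sstar_not_lt σ hj]; exact sstar_not_lt σ⁻¹ hj

-- ### the fully symmetric profile Zp and F Zp = univ
noncomputable def Zp (k : ℕ) (A : Profile C) (a b : C) : Profile C :=
  ⟨(Finset.range (mm (C := C) k)).image (fun j => KK A a b * j + hh a b * NN A),
    pat k A a b⟩

lemma mem_Zp_voters {k : ℕ} {A : Profile C} {a b : C} {n : ℕ} :
    n ∈ (Zp k A a b).voters ↔ ∃ j < mm (C := C) k, n = KK A a b * j + hh a b * NN A := by
  simp only [Zp, Finset.mem_image, Finset.mem_range]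
  constructor
  · rintro ⟨j, hj, rfl⟩; exact ⟨j, hj, rfl⟩
  · rintro ⟨j, hj, rfl⟩; exact ⟨j, hj, rfl⟩

lemma Zp_slot_div {k : ℕ} {A : Profile C} {a b : C} (j : ℕ) :
    (KK A a b * j + hh a b * NN A) / KK A a b = j ∧
      (KK A a b * j + hh a b * NN A) % KK A a b = hh a b * NN A := by
  constructor
  · rw [Nat.mul_add_div (KK_pos A a b), Nat.div_eq_of_lt (hN_lt_KK A a b), Nat.add_zero]
  · rw [Nat.mul_add_mod, Nat.mod_eq_of_lt (hN_lt_KK A a b)]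

lemma Zp_ballot_voter {k : ℕ} {A : Profile C} {a b : C} {j : ℕ} (hj : j < mm (C := C) k)
    (hm : 0 < mm (C := C) k) :
    (Zp k A a b).ballot (KK A a b * j + hh a b * NN A)
      = ((ee k ⟨j, hj⟩ : {S // S ∈ KS (C := C) k}) : Finset C) := by
  show pat k A a b _ = _
  rw [pat_eq _ hm]
  have harg : (⟨(KK A a b * j + hh a b * NN A) / KK A a b % mm (C := C) k,
      Nat.mod_lt _ hm⟩ : Fin (mm (C := C) k)) = ⟨j, hj⟩ := by
    apply Fin.ext
    simp only
    rw [(Zp_slot_div (k := k) (A := A) (a := a) (b := b) j).1, Nat.mod_eq_of_lt hj]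
  rw [harg]

lemma Zp_valid {k : ℕ} {A : Profile C} {a b : C} (hm : 0 < mm (C := C) k) :
    Valid k (Zp k A a b) := by
  constructor
  · refine ⟨hh a b * NN A, ?_⟩
    rw [mem_Zp_voters]
    exact ⟨0, hm, by simp⟩
  · intro i _
    exact pat_card i hm

noncomputable def rhoFun (k : ℕ) (A : Profile C) (a b : C) (σ : Equiv.Perm C) (n : ℕ) : ℕ :=
  KK A a b * (mm (C := C) k * (n / KK A a b / mm (C := C) k)
    + sstar k σ (n / KK A a b % mm (C := C) k)) + n % KK A a b

lemma rhoFun_decomp {k : ℕ} {A : Profile C} {a b : C} (σ : Equiv.Perm C) (B r : ℕ)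
    (hr : r < KK A a b) :
    rhoFun k A a b σ (KK A a b * B + r)
      = KK A a b * (mm (C := C) k * (B / mm (C := C) k)
          + sstar k σ (B % mm (C := C) k)) + r := by
  rw [rhoFun, Nat.mul_add_div (KK_pos A a b), Nat.div_eq_of_lt hr, Nat.add_zero,
    Nat.mul_add_mod, Nat.mod_eq_of_lt hr]

lemma rhoFun_invol {k : ℕ} {A : Profile C} {a b : C} (σ : Equiv.Perm C) (n : ℕ) :
    rhoFun k A a b σ⁻¹ (rhoFun k A a b σ n) = n := by
  by_cases hm : 0 < mm (C := C) k
  · have hd : n = KK A a b * (n / KK A a b) + n % KK A a b := (Nat.div_add_mod n (KK A a b)).symm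
    have hr : n % KK A a b < KK A a b := Nat.mod_lt _ (KK_pos A a b)
    set B := n / KK A a b with hB
    set r := n % KK A a b with hrdef
    have h1 : rhoFun k A a b σ n = KK A a b * (mm (C := C) k * (B / mm (C := C) k)
        + sstar k σ (B % mm (C := C) k)) + r := by
      conv_lhs => rw [hd]
      exact rhoFun_decomp σ B r hr
    have hs : sstar k σ (B % mm (C := C) k) < mm (C := C) k :=
      sstar_lt σ (Nat.mod_lt _ hm)
    rw [h1, rhoFun_decomp σ⁻¹ _ r hr,
      Nat.mul_add_div hm, Nat.div_eq_of_lt hs, Nat.add_zero,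
      Nat.mul_add_mod, Nat.mod_eq_of_lt hs, sstar_sstar,
      Nat.div_add_mod, Nat.div_add_mod]
  · have hm0 : mm (C := C) k = 0 := Nat.eq_zero_of_not_pos hm
    have : ∀ τ : Equiv.Perm C, rhoFun k A a b τ n = n := by
      intro τ
      rw [rhoFun, hm0]
      simp only [Nat.mod_zero, Nat.div_zero, Nat.zero_mul, Nat.zero_add]
      rw [sstar_not_lt τ (by rw [hm0]; exact Nat.not_lt_zero _), Nat.div_add_mod]
    rw [this σ]
    have h2 : ∀ τ : Equiv.Perm C, rhoFun k A a b τ n = n := this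
    exact h2 σ⁻¹

noncomputable def rho (k : ℕ) (A : Profile C) (a b : C) (σ : Equiv.Perm C) : Equiv.Perm ℕ :=
  ⟨rhoFun k A a b σ, rhoFun k A a b σ⁻¹, rhoFun_invol σ, by
    intro n
    have := rhoFun_invol (k := k) (A := A) (a := a) (b := b) σ⁻¹ n
    rwa [inv_inv] at this⟩

lemma rho_symm_apply {k : ℕ} {A : Profile C} {a b : C} (σ : Equiv.Perm C) (n : ℕ) :
    (rho k A a b σ).symm n = rhoFun k A a b σ⁻¹ n := rfl

lemma rho_block {k : ℕ} {A : Profile C} {a b : C} (σ : Equiv.Perm C) (n : ℕ) :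
    rhoFun k A a b σ n / KK A a b % mm (C := C) k
        = sstar k σ (n / KK A a b % mm (C := C) k) ∧
      rhoFun k A a b σ n % KK A a b = n % KK A a b := by
  by_cases hm : 0 < mm (C := C) k
  · have hr : n % KK A a b < KK A a b := Nat.mod_lt _ (KK_pos A a b)
    have hs : sstar k σ (n / KK A a b % mm (C := C) k) < mm (C := C) k :=
      sstar_lt σ (Nat.mod_lt _ hm)
    rw [rhoFun]
    constructor
    · rw [Nat.mul_add_div (KK_pos A a b), Nat.div_eq_of_lt hr, Nat.add_zero,
        Nat.mul_add_mod, Nat.mod_eq_of_lt hs]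
    · rw [Nat.mul_add_mod, Nat.mod_eq_of_lt hr]
  · have hm0 : mm (C := C) k = 0 := Nat.eq_zero_of_not_pos hm
    rw [rhoFun, hm0]
    simp only [Nat.mod_zero, Nat.div_zero, Nat.zero_mul, Nat.zero_add]
    rw [sstar_not_lt σ (by rw [hm0]; exact Nat.not_lt_zero _), Nat.div_add_mod]
    exact ⟨rfl, rfl⟩

lemma rho_voters {k : ℕ} {A : Profile C} {a b : C} (σ : Equiv.Perm C) {n : ℕ}
    (hn : n ∈ (Zp k A a b).voters) : rhoFun k A a b σ n ∈ (Zp k A a b).voters := by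
  rw [mem_Zp_voters] at hn ⊢
  obtain ⟨j, hj, rfl⟩ := hn
  refine ⟨sstar k σ j, sstar_lt σ hj, ?_⟩
  rw [rhoFun_decomp σ j _ (hN_lt_KK A a b), Nat.div_eq_of_lt hj, Nat.mul_zero,
    Nat.zero_add, Nat.mod_eq_of_lt hj]

lemma rho_fixes_Zp {k : ℕ} {A : Profile C} {a b : C} (σ : Equiv.Perm C) :
    Profile.permVoters (rho k A a b σ) (Profile.mapCand σ (Zp k A a b)) = Zp k A a b := by
  apply profile_ext
  · show ((Zp k A a b).voters).map _ = (Zp k A a b).voters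
    ext n
    rw [Finset.mem_map_equiv]
    constructor
    · intro hmem
      have h2 := rho_voters (k := k) (A := A) (a := a) (b := b) σ hmem
      show n ∈ _
      have : rhoFun k A a b σ ((rho k A a b σ).symm n) = n := (rho k A a b σ).apply_symm_apply n
      rwa [this] at h2
    · intro hmem
      rw [rho_symm_apply]
      exact rho_voters σ⁻¹ hmem
  · funext n
    show ((Zp k A a b).ballot ((rho k A a b σ).symm n)).image ⇑σ = (Zp k A a b).ballot n
    rw [rho_symm_apply]
    show (pat k A a b _).image ⇑σ = pat k A a b n
    by_cases hm : 0 < mm (C := C) k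
    · rw [pat_eq _ hm, pat_eq _ hm]
      have hb := (rho_block (k := k) (A := A) (a := a) (b := b) σ⁻¹ n).1
      have h1 : (⟨rhoFun k A a b σ⁻¹ n / KK A a b % mm (C := C) k, Nat.mod_lt _ hm⟩ : Fin (mm (C := C) k))
          = ⟨sstar k σ⁻¹ (n / KK A a b % mm (C := C) k), sstar_lt σ⁻¹ (Nat.mod_lt _ hm)⟩ :=
        Fin.ext hb
      rw [h1, ee_sstar σ⁻¹ (Nat.mod_lt _ hm)]
      have := image_inv_eq (σ := σ⁻¹)
        (S := ((ee k ⟨n / KK A a b % mm (C := C) k, Nat.mod_lt _ hm⟩ : {S // S ∈ KS (C := C) k}) : Finset C)) rfl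
      rwa [inv_inv] at this
    · rw [pat, dif_neg hm, pat, dif_neg hm]
      exact Finset.image_empty _

end ESET

section FZsec
variable {C : Type} [Fintype C] [DecidableEq C]
open ESET

lemma FZ_univ (k : ℕ) (A : Profile C) (a b : C)
    (F : Profile C → Finset C)
    (hne : ∀ A, Valid k A → (F A).Nonempty)
    (hanon : ∀ A (π : Equiv.Perm ℕ), Valid k A → F (Profile.permVoters π A) = F A)
    (hneut : ∀ A (τ : Equiv.Perm C), Valid k A → F (Profile.mapCand τ A) = (F A).image τ)
    (hm : 0 < mm (C := C) k) :
    F (Zp k A a b) = Finset.univ := by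
  have hval : Valid k (Zp k A a b) := Zp_valid hm
  have key : ∀ σ : Equiv.Perm C, F (Zp k A a b) = (F (Zp k A a b)).image ⇑σ := by
    intro σ
    conv_lhs => rw [← rho_fixes_Zp (k := k) (A := A) (a := a) (b := b) σ]
    rw [hanon _ _ (valid_mapCand hval σ), hneut _ _ hval]
  obtain ⟨x, hx⟩ := hne _ hval
  ext c
  simp only [Finset.mem_univ, iff_true]
  rw [key (Equiv.swap x c)]
  exact Finset.mem_image.mpr ⟨x, hx, Equiv.swap_apply_left _ _⟩

end FZsec

namespace ESET
variable {C : Type} [Fintype C] [DecidableEq C]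

-- ### copies of A and the big combined profile
noncomputable def cpy (A : Profile C) (σ : Equiv.Perm C) (i : ℕ) : Profile C :=
  Profile.mapCand σ (Profile.permVoters (bswap (NN A) i) A)

lemma cpy_voters (A : Profile C) (σ : Equiv.Perm C) (i : ℕ) :
    (cpy A σ i).voters = A.voters.image (fun v => v + i * NN A) := by
  show A.voters.map _ = _
  rw [Finset.map_eq_image]
  apply Finset.image_congr
  intro v hv
  exact bswapFun_lt i (voters_lt_NN hv)

lemma slot_div {N : ℕ} (hN : 0 < N) {v : ℕ} (hv : v < N) (i : ℕ) :
    (v + i * N) / N = i ∧ (v + i * N) % N = v := by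
  constructor
  · rw [Nat.add_mul_div_right _ _ hN, Nat.div_eq_of_lt hv, Nat.zero_add]
  · rw [Nat.add_mul_mod_self_right, Nat.mod_eq_of_lt hv]

lemma mem_cpy_voters {A : Profile C} {σ : Equiv.Perm C} {i n : ℕ} :
    n ∈ (cpy A σ i).voters ↔ (n / NN A = i ∧ n % NN A ∈ A.voters) := by
  rw [cpy_voters, Finset.mem_image]
  constructor
  · rintro ⟨v, hv, rfl⟩
    obtain ⟨h1, h2⟩ := slot_div (NN_pos A) (voters_lt_NN hv) i
    rw [h1, h2]
    exact ⟨rfl, hv⟩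
  · rintro ⟨h1, h2⟩
    refine ⟨n % NN A, h2, ?_⟩
    have h3 := Nat.div_add_mod n (NN A)
    rw [h1, Nat.mul_comm] at h3
    omega

lemma cpy_ballot_mem {A : Profile C} {σ : Equiv.Perm C} {i v : ℕ} (hv : v < NN A) :
    (cpy A σ i).ballot (v + i * NN A) = (A.ballot v).image ⇑σ := by
  show ((A.ballot ((bswap (NN A) i).symm (v + i * NN A))).image ⇑σ) = _
  rw [bswap_symm_apply, bswapFun_block i hv]

lemma cpy_valid {k : ℕ} {A : Profile C} (hval : Valid k A) (σ : Equiv.Perm C) (i : ℕ) :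
    Valid k (cpy A σ i) := valid_mapCand (valid_permVoters hval _) σ

noncomputable def mkP (k : ℕ) (A : Profile C) (a b : C) : ℕ → ℕ → Profile C
  | 0, _ => Zp k A a b
  | (c+1), i => (cpy A (g a b i) i).combine (mkP k A a b c (i+1))

lemma mkP_zero (k : ℕ) (A : Profile C) (a b : C) (i : ℕ) :
    mkP k A a b 0 i = Zp k A a b := rfl

lemma mkP_succ (k : ℕ) (A : Profile C) (a b : C) (c i : ℕ) :
    mkP k A a b (c+1) i = (cpy A (g a b i) i).combine (mkP k A a b c (i+1)) := rfl

lemma mkP_voters_lb {k : ℕ} {A : Profile C} {a b : C} :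
    ∀ c i, i + c ≤ hh a b → ∀ n ∈ (mkP k A a b c i).voters, i * NN A ≤ n := by
  intro c
  induction c with
  | zero =>
    intro i hi n hn
    rw [mkP_zero, mem_Zp_voters] at hn
    obtain ⟨j, _, rfl⟩ := hn
    have h1 : i * NN A ≤ hh a b * NN A := Nat.mul_le_mul_right _ (by omega)
    exact le_trans h1 (Nat.le_add_left _ _)
  | succ c ih =>
    intro i hi n hn
    rw [mkP_succ, Profile.combine] at hn
    simp only [Finset.mem_union] at hn
    rcases hn with hn | hn
    · rw [mem_cpy_voters] at hn
      have h3 := Nat.div_mul_le_self n (NN A)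
      rw [hn.1] at h3
      exact h3
    · have h2 := ih (i+1) (by omega) n hn
      have h1 : i * NN A ≤ (i+1) * NN A := Nat.mul_le_mul_right _ (by omega)
      omega

lemma mkP_disj {k : ℕ} {A : Profile C} {a b : C} {c i : ℕ} (hi : i + 1 + c ≤ hh a b) :
    (cpy A (g a b i) i).Disj (mkP k A a b c (i+1)) := by
  rw [Profile.Disj, Finset.disjoint_left]
  intro n hn hn2
  rw [mem_cpy_voters] at hn
  have h3 := Nat.div_add_mod n (NN A)
  rw [hn.1] at h3
  have h4 : n % NN A < NN A := Nat.mod_lt _ (NN_pos A)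
  have h5 : n < NN A * i + NN A := by omega
  have h6 : (i+1) * NN A ≤ n := mkP_voters_lb c (i+1) (by omega) n hn2
  rw [Nat.succ_mul] at h6
  rw [Nat.mul_comm (NN A) i] at h5
  omega

lemma mkP_valid {k : ℕ} {A : Profile C} {a b : C} (hval : Valid k A)
    (hm : 0 < mm (C := C) k) :
    ∀ c i, i + c ≤ hh a b → Valid k (mkP k A a b c i) := by
  intro c
  induction c with
  | zero => intro i _; exact Zp_valid hm
  | succ c ih =>
    intro i hi
    rw [mkP_succ]
    exact valid_combine (cpy_valid hval _ _) (ih (i+1) (by omega))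

lemma mkP_ballot {k : ℕ} {A : Profile C} {a b : C} :
    ∀ c i, i + c ≤ hh a b → ∀ n,
      (mkP k A a b c i).ballot n =
        if i ≤ n / NN A ∧ n / NN A < i + c ∧ n % NN A ∈ A.voters
        then (A.ballot (n % NN A)).image ⇑(g a b (n / NN A))
        else pat k A a b n := by
  intro c
  induction c with
  | zero =>
    intro i _ n
    rw [if_neg (by omega)]
    rfl
  | succ c ih =>
    intro i hi n
    rw [mkP_succ]
    show (if n ∈ (cpy A (g a b i) i).voters then (cpy A (g a b i) i).ballot n
      else (mkP k A a b c (i+1)).ballot n) = _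
    by_cases hcv : n ∈ (cpy A (g a b i) i).voters
    · rw [if_pos hcv]
      obtain ⟨h1, h2⟩ := mem_cpy_voters.mp hcv
      have hvlt : n % NN A < NN A := Nat.mod_lt _ (NN_pos A)
      have hn : n = n % NN A + i * NN A := by
        have h3 := Nat.div_add_mod n (NN A)
        rw [h1, Nat.mul_comm] at h3
        omega
      rw [if_pos ⟨by omega, by omega, h2⟩]
      conv_lhs => rw [hn]
      rw [cpy_ballot_mem hvlt, h1]
    · rw [if_neg hcv, ih (i+1) (by omega) n]
      rw [mem_cpy_voters] at hcv
      by_cases hcond : i ≤ n / NN A ∧ n / NN A < i + (c+1) ∧ n % NN A ∈ A.voters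
      · have hne : n / NN A ≠ i := fun h => hcv ⟨h, hcond.2.2⟩
        obtain ⟨hc1, hc2, hc3⟩ := hcond
        rw [if_pos ⟨by omega, by omega, hc3⟩, if_pos ⟨hc1, hc2, hc3⟩]
      · have hinner : ¬ (i+1 ≤ n / NN A ∧ n / NN A < i+1+c ∧ n % NN A ∈ A.voters) := by
          rintro ⟨hc1, hc2, hc3⟩
          exact hcond ⟨by omega, by omega, hc3⟩
        rw [if_neg hinner, if_neg hcond]

end ESET

section Fchain
variable {C : Type} [Fintype C] [DecidableEq C]
open ESET

lemma F_cpy (k : ℕ) (A : Profile C) (σ : Equiv.Perm C) (i : ℕ)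
    (F : Profile C → Finset C)
    (hanon : ∀ A (π : Equiv.Perm ℕ), Valid k A → F (Profile.permVoters π A) = F A)
    (hneut : ∀ A (τ : Equiv.Perm C), Valid k A → F (Profile.mapCand τ A) = (F A).image τ)
    (hval : Valid k A) :
    F (cpy A σ i) = (F A).image ⇑σ := by
  rw [cpy, hneut _ _ (valid_permVoters hval _), hanon _ _ hval]

lemma F_mkP (k : ℕ) (A : Profile C) (a b : C)
    (F : Profile C → Finset C)
    (hne : ∀ A, Valid k A → (F A).Nonempty)
    (hanon : ∀ A (π : Equiv.Perm ℕ), Valid k A → F (Profile.permVoters π A) = F A)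
    (hneut : ∀ A (τ : Equiv.Perm C), Valid k A → F (Profile.mapCand τ A) = (F A).image τ)
    (hcons : ∀ A A', Valid k A → Valid k A' → A.Disj A' →
      (F A ∩ F A').Nonempty → F (A.combine A') = F A ∩ F A')
    (hval : Valid k A) (hm : 0 < mm (C := C) k) (ha : a ∈ F A) :
    ∀ c i, i + c ≤ hh a b →
      a ∈ F (mkP k A a b c i) ∧
        ∀ x ∈ F (mkP k A a b c i), ∀ j, i ≤ j → j < i + c → x ∈ (F A).image ⇑(g a b j) := by
  intro c
  induction c with
  | zero =>
    intro i _
    rw [mkP_zero, FZ_univ k A a b F hne hanon hneut hm]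
    exact ⟨Finset.mem_univ _, fun x _ j h1 h2 => absurd (lt_of_le_of_lt h1 h2) (by omega)⟩
  | succ c ih =>
    intro i hi
    obtain ⟨iha, ihsub⟩ := ih (i+1) (by omega)
    have hilt : i < hh a b := by omega
    have hFcpy : F (cpy A (g a b i) i) = (F A).image ⇑(g a b i) :=
      F_cpy k A _ i F hanon hneut hval
    have hacpy : a ∈ F (cpy A (g a b i) i) := by
      rw [hFcpy]
      exact Finset.mem_image.mpr ⟨a, ha, (g_fix hilt).1⟩
    have hinter : (F (cpy A (g a b i) i) ∩ F (mkP k A a b c (i+1))).Nonempty :=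
      ⟨a, Finset.mem_inter.mpr ⟨hacpy, iha⟩⟩
    have hcomb : F (mkP k A a b (c+1) i)
        = F (cpy A (g a b i) i) ∩ F (mkP k A a b c (i+1)) := by
      rw [mkP_succ]
      exact hcons _ _ (cpy_valid hval _ _) (mkP_valid hval hm c (i+1) (by omega))
        (mkP_disj (by omega)) hinter
    constructor
    · rw [hcomb]
      exact Finset.mem_inter.mpr ⟨hacpy, iha⟩
    · intro x hx j hj1 hj2
      rw [hcomb, Finset.mem_inter] at hx
      rcases Nat.eq_or_lt_of_le hj1 with rfl | hj3
      · rw [← hFcpy]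
        exact hx.1
      · exact ihsub x hx.2 j hj3 (by omega)

end Fchain

namespace ESET
variable {C : Type} [Fintype C] [DecidableEq C]

-- ### pairing of unbalanced voters
noncomputable def Fa (A : Profile C) (a b : C) : Finset ℕ :=
  A.voters.filter fun v => a ∈ A.ballot v ∧ b ∉ A.ballot v

lemma score_card {A : Profile C} {a b : C} (hs : appScore A a = appScore A b) :
    (Fa A a b).card = (Fa A b a).card := by
  set Sa := A.voters.filter (fun v => a ∈ A.ballot v) with hSa
  set Sb := A.voters.filter (fun v => b ∈ A.ballot v) with hSb
  have e1 : Fa A a b = Sa \ Sb := by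
    ext v
    simp only [Fa, hSa, hSb, Finset.mem_filter, Finset.mem_sdiff]
    tauto
  have e2 : Fa A b a = Sb \ Sa := by
    ext v
    simp only [Fa, hSa, hSb, Finset.mem_filter, Finset.mem_sdiff]
    tauto
  have c1 : (Sa \ Sb).card + (Sa ∩ Sb).card = Sa.card := Finset.card_sdiff_add_card_inter _ _
  have c2 : (Sb \ Sa).card + (Sb ∩ Sa).card = Sb.card := Finset.card_sdiff_add_card_inter _ _
  have c3 : Sa ∩ Sb = Sb ∩ Sa := Finset.inter_comm _ _
  have c4 : (Sa ∩ Sb).card = (Sb ∩ Sa).card := congrArg Finset.card c3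
  have c5 : Sa.card = Sb.card := hs
  rw [e1, e2]
  omega

noncomputable def Eab (A : Profile C) (a b : C) (hc : (Fa A a b).card = (Fa A b a).card) :
    {x // x ∈ Fa A a b} ≃ {x // x ∈ Fa A b a} := Finset.equivOfCardEq hc

noncomputable def beta (A : Profile C) (a b : C) (hc : (Fa A a b).card = (Fa A b a).card)
    (v : ℕ) : ℕ :=
  if hv : v ∈ Fa A a b then (Eab A a b hc ⟨v, hv⟩ : ℕ) else v

noncomputable def betainv (A : Profile C) (a b : C) (hc : (Fa A a b).card = (Fa A b a).card)
    (v : ℕ) : ℕ :=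
  if hv : v ∈ Fa A b a then ((Eab A a b hc).symm ⟨v, hv⟩ : ℕ) else v

lemma beta_of_mem {A : Profile C} {a b : C} {hc : (Fa A a b).card = (Fa A b a).card} {v : ℕ}
    (hv : v ∈ Fa A a b) : beta A a b hc v = (Eab A a b hc ⟨v, hv⟩ : ℕ) := dif_pos hv

lemma betainv_of_mem {A : Profile C} {a b : C} {hc : (Fa A a b).card = (Fa A b a).card} {v : ℕ}
    (hv : v ∈ Fa A b a) : betainv A a b hc v = ((Eab A a b hc).symm ⟨v, hv⟩ : ℕ) := dif_pos hv

lemma beta_mem {A : Profile C} {a b : C} {hc : (Fa A a b).card = (Fa A b a).card} {v : ℕ}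
    (hv : v ∈ Fa A a b) : beta A a b hc v ∈ Fa A b a := by
  rw [beta_of_mem hv]
  exact (Eab A a b hc ⟨v, hv⟩).2

lemma betainv_mem {A : Profile C} {a b : C} {hc : (Fa A a b).card = (Fa A b a).card} {v : ℕ}
    (hv : v ∈ Fa A b a) : betainv A a b hc v ∈ Fa A a b := by
  rw [betainv_of_mem hv]
  exact ((Eab A a b hc).symm ⟨v, hv⟩).2

lemma betainv_beta {A : Profile C} {a b : C} {hc : (Fa A a b).card = (Fa A b a).card} {v : ℕ}
    (hv : v ∈ Fa A a b) : betainv A a b hc (beta A a b hc v) = v := by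
  rw [betainv_of_mem (beta_mem hv)]
  have h1 : (⟨beta A a b hc v, beta_mem hv⟩ : {x // x ∈ Fa A b a})
      = Eab A a b hc ⟨v, hv⟩ := by
    exact Subtype.ext (beta_of_mem hv)
  rw [h1, Equiv.symm_apply_apply]

lemma beta_betainv {A : Profile C} {a b : C} {hc : (Fa A a b).card = (Fa A b a).card} {v : ℕ}
    (hv : v ∈ Fa A b a) : beta A a b hc (betainv A a b hc v) = v := by
  rw [beta_of_mem (betainv_mem hv)]
  have h1 : (⟨betainv A a b hc v, betainv_mem hv⟩ : {x // x ∈ Fa A a b})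
      = (Eab A a b hc).symm ⟨v, hv⟩ := by
    exact Subtype.ext (betainv_of_mem hv)
  rw [h1, Equiv.apply_symm_apply]

noncomputable def gam (A : Profile C) (a b : C) (hc : (Fa A a b).card = (Fa A b a).card)
    (v : ℕ) : Equiv.Perm C :=
  if h : ∃ δ : Equiv.Perm C, δ a = b ∧ δ b = a ∧
      (A.ballot (beta A a b hc v)).image ⇑δ = A.ballot v then h.choose else 1

lemma gam_spec {k : ℕ} {A : Profile C} {a b : C}
    {hc : (Fa A a b).card = (Fa A b a).card} {v : ℕ}
    (hval : Valid k A) (hv : v ∈ Fa A a b) :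
    (gam A a b hc v) a = b ∧ (gam A a b hc v) b = a ∧
      (A.ballot (beta A a b hc v)).image ⇑(gam A a b hc v) = A.ballot v := by
  have hv' : beta A a b hc v ∈ Fa A b a := beta_mem hv
  rw [Fa, Finset.mem_filter] at hv hv'
  obtain ⟨hvv, haS, hbS⟩ := hv
  obtain ⟨hvv', hbT, haT⟩ := hv'
  set S := A.ballot v with hS
  set T := A.ballot (beta A a b hc v) with hT
  have hcards : T.card = S.card := by
    rw [hval.2 _ hvv', hval.2 _ hvv]
  have hex : ∃ δ : Equiv.Perm C, δ a = b ∧ δ b = a ∧ T.image ⇑δ = S := by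
    set U := T.image ⇑(Equiv.swap a b) with hU
    have haU : a ∈ U := Finset.mem_image.mpr ⟨b, hbT, Equiv.swap_apply_right _ _⟩
    have hbU : b ∉ U := by
      rw [hU]
      intro hmem
      obtain ⟨y, hy, hyb⟩ := Finset.mem_image.mp hmem
      have : y = a := by
        have := congrArg (Equiv.swap a b) hyb
        rwa [Equiv.swap_apply_self, Equiv.swap_apply_right] at this
      exact haT (this ▸ hy)
    have hUcard : U.card = S.card := by
      rw [hU, Finset.card_image_of_injective _ (Equiv.swap a b).injective, hcards]
    obtain ⟨δ, hδa, hδb, him⟩ := exists_perm_fix a b ((U \ S).card) U S le_rfl hUcard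
      haU haS hbU hbS
    refine ⟨δ * Equiv.swap a b, ?_, ?_, ?_⟩
    · rw [Equiv.Perm.mul_apply, Equiv.swap_apply_left, hδb]
    · rw [Equiv.Perm.mul_apply, Equiv.swap_apply_right, hδa]
    · rw [image_mul, ← hU, him]
  have hgam : gam A a b hc v = hex.choose := dif_pos hex
  rw [hgam]
  exact hex.choose_spec

-- ### the pattern-block involution
noncomputable def tst (k : ℕ) (a b : C) (j : ℕ) : ℕ := sstar k (Equiv.swap a b) j

lemma tst_tst (k : ℕ) (a b : C) (j : ℕ) : tst k a b (tst k a b j) = j := by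
  have h := sstar_sstar (k := k) (Equiv.swap a b) j
  rwa [Equiv.swap_inv] at h

lemma tst_lt {k : ℕ} (a b : C) {j : ℕ} (hj : j < mm (C := C) k) :
    tst k a b j < mm (C := C) k := sstar_lt _ hj

lemma tst_not_lt {k : ℕ} (a b : C) {j : ℕ} (hj : ¬ j < mm (C := C) k) :
    tst k a b j = j := sstar_not_lt _ hj

noncomputable def psiF (k : ℕ) (a b : C) (B : ℕ) : ℕ :=
  mm (C := C) k * (B / mm (C := C) k) + tst k a b (B % mm (C := C) k)

lemma psiF_div (k : ℕ) (a b : C) {B : ℕ} (hm : 0 < mm (C := C) k) :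
    psiF k a b B / mm (C := C) k = B / mm (C := C) k ∧
      psiF k a b B % mm (C := C) k = tst k a b (B % mm (C := C) k) := by
  have hlt : tst k a b (B % mm (C := C) k) < mm (C := C) k := tst_lt a b (Nat.mod_lt _ hm)
  constructor
  · rw [psiF, Nat.mul_add_div hm, Nat.div_eq_of_lt hlt, Nat.add_zero]
  · rw [psiF, Nat.mul_add_mod, Nat.mod_eq_of_lt hlt]

lemma psiF_invol (k : ℕ) (a b : C) (B : ℕ) : psiF k a b (psiF k a b B) = B := by
  by_cases hm : 0 < mm (C := C) k
  · obtain ⟨h1, h2⟩ := psiF_div (k := k) a b (B := B) hm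
    conv_lhs => rw [psiF]
    rw [h1, h2, tst_tst, Nat.div_add_mod]
  · have hm0 : mm (C := C) k = 0 := Nat.eq_zero_of_not_pos hm
    have hB : ∀ B' : ℕ, psiF k a b B' = B' := by
      intro B'
      rw [psiF, hm0, Nat.mod_zero, Nat.zero_mul, Nat.zero_add]
      exact tst_not_lt a b (by rw [hm0]; exact Nat.not_lt_zero _)
    rw [hB, hB]

noncomputable def psiQ (k : ℕ) (a b : C) (B : ℕ) : ℕ :=
  if tst k a b (B % mm (C := C) k) = B % mm (C := C) k then B
  else if B % mm (C := C) k = 0 then B - mm (C := C) k + tst k a b 0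
  else if tst k a b (B % mm (C := C) k) = 0 then B + mm (C := C) k - B % mm (C := C) k
  else B - B % mm (C := C) k + tst k a b (B % mm (C := C) k)

lemma psiQ_spec (k : ℕ) (a b : C) {B : ℕ} (hm : 0 < mm (C := C) k) (hB : 1 ≤ B) :
    1 ≤ psiQ k a b B ∧
      psiQ k a b B % mm (C := C) k = tst k a b (B % mm (C := C) k) ∧
      psiQ k a b (psiQ k a b B) = B := by
  have hj : B % mm (C := C) k < mm (C := C) k := Nat.mod_lt _ hm
  have hd : mm (C := C) k * (B / mm (C := C) k) + B % mm (C := C) k = B :=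
    Nat.div_add_mod _ _
  by_cases h1 : tst k a b (B % mm (C := C) k) = B % mm (C := C) k
  · have hval : psiQ k a b B = B := by unfold psiQ; rw [if_pos h1]
    rw [hval, hval, h1]
    exact ⟨hB, rfl, rfl⟩
  · by_cases h2 : B % mm (C := C) k = 0
    · -- case 2 : j = 0, tst 0 ≠ 0
      have ht0 : tst k a b 0 ≠ 0 := by rw [← h2]; exact h1
      have ht0lt : tst k a b 0 < mm (C := C) k := tst_lt a b hm
      have hq1 : 1 ≤ B / mm (C := C) k := by
        rcases Nat.eq_zero_or_pos (B / mm (C := C) k) with h | h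
        · rw [h, Nat.mul_zero, Nat.zero_add] at hd; omega
        · exact h
      obtain ⟨q', hq'⟩ : ∃ q', B / mm (C := C) k = q' + 1 := ⟨_, (Nat.succ_pred_eq_of_pos hq1).symm⟩
      have hmulsucc : mm (C := C) k * (q' + 1) = mm (C := C) k * q' + mm (C := C) k :=
        Nat.mul_succ _ _
      have hB2 : B = mm (C := C) k * q' + mm (C := C) k := by
        rw [hq', hmulsucc] at hd; omega
      have hval : psiQ k a b B = mm (C := C) k * q' + tst k a b 0 := by
        unfold psiQ; rw [if_neg h1, if_pos h2]; omega
      have hVmod : (mm (C := C) k * q' + tst k a b 0) % mm (C := C) k = tst k a b 0 := by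
        rw [Nat.mul_add_mod, Nat.mod_eq_of_lt ht0lt]
      refine ⟨by omega, by rw [h2, hval, hVmod], ?_⟩
      rw [hval]; unfold psiQ; rw [hVmod]
      rw [if_neg (by rw [tst_tst]; omega), if_neg ht0, if_pos (by rw [tst_tst])]
      omega
    · by_cases h3 : tst k a b (B % mm (C := C) k) = 0
      · -- case 3 : j ≠ 0, tst j = 0
        have ht0 : tst k a b 0 = B % mm (C := C) k := by rw [← h3, tst_tst]
        have hmulsucc : mm (C := C) k * (B / mm (C := C) k + 1)
            = mm (C := C) k * (B / mm (C := C) k) + mm (C := C) k := Nat.mul_succ _ _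
        have hval : psiQ k a b B = mm (C := C) k * (B / mm (C := C) k + 1) := by
          unfold psiQ; rw [if_neg h1, if_neg h2, if_pos h3]; omega
        have hVmod : mm (C := C) k * (B / mm (C := C) k + 1) % mm (C := C) k = 0 :=
          Nat.mul_mod_right _ _
        refine ⟨by omega, by rw [h3, hval, hVmod], ?_⟩
        rw [hval]; unfold psiQ; rw [hVmod]
        rw [if_neg (by rw [ht0]; omega), if_pos rfl]
        rw [ht0]
        omega
      · -- case 4
        have htlt : tst k a b (B % mm (C := C) k) < mm (C := C) k := tst_lt a b hj
        have hval : psiQ k a b B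
            = mm (C := C) k * (B / mm (C := C) k) + tst k a b (B % mm (C := C) k) := by
          unfold psiQ; rw [if_neg h1, if_neg h2, if_neg h3]; omega
        have hVmod : (mm (C := C) k * (B / mm (C := C) k) + tst k a b (B % mm (C := C) k))
            % mm (C := C) k = tst k a b (B % mm (C := C) k) := by
          rw [Nat.mul_add_mod, Nat.mod_eq_of_lt htlt]
        refine ⟨by omega, by rw [hval, hVmod], ?_⟩
        rw [hval]; unfold psiQ; rw [hVmod]
        rw [if_neg (by rw [tst_tst]; omega), if_neg (by omega),
          if_neg (by rw [tst_tst]; omega)]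
        rw [tst_tst]
        omega

-- ### the global involution
def Qpred (A : Profile C) (a b : C) (n : ℕ) : Prop :=
  n / NN A < hh a b ∧ n % NN A ∈ A.voters

lemma Qpred_lt {A : Profile C} {a b : C} {n : ℕ} (hq : Qpred A a b n) : n < KK A a b := by
  have h1 : n < hh a b * NN A := (Nat.div_lt_iff_lt_mul (NN_pos A)).mp hq.1
  exact lt_trans h1 (hN_lt_KK A a b)

lemma not_Qpred_of_ge {A : Profile C} {a b : C} {n : ℕ} (h : KK A a b ≤ n) :
    ¬ Qpred A a b n := fun hq => absurd (Qpred_lt hq) (by omega)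

noncomputable def Pif (k : ℕ) (A : Profile C) (a b : C)
    (hc : (Fa A a b).card = (Fa A b a).card) (n : ℕ) : ℕ :=
  if Qpred A a b n then
    (if a ∈ A.ballot (n % NN A) ∧ b ∉ A.ballot (n % NN A) then
      beta A a b hc (n % NN A)
        + idx a b (Equiv.swap a b * g a b (n / NN A) * gam A a b hc (n % NN A)) * NN A
    else if b ∈ A.ballot (n % NN A) ∧ a ∉ A.ballot (n % NN A) then
      betainv A a b hc (n % NN A)
        + idx a b (Equiv.swap a b * g a b (n / NN A)
            * (gam A a b hc (betainv A a b hc (n % NN A)))⁻¹) * NN A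
    else n % NN A + idx a b (Equiv.swap a b * g a b (n / NN A) * Equiv.swap a b) * NN A)
  else
    KK A a b * (if Qpred A a b (n % KK A a b) then psiQ k a b (n / KK A a b)
      else psiF k a b (n / KK A a b)) + n % KK A a b

lemma Pif_case1 {k : ℕ} {A : Profile C} {a b : C}
    {hc : (Fa A a b).card = (Fa A b a).card} {n : ℕ} (hq : Qpred A a b n)
    (hT : a ∈ A.ballot (n % NN A) ∧ b ∉ A.ballot (n % NN A)) :
    Pif k A a b hc n = beta A a b hc (n % NN A)
      + idx a b (Equiv.swap a b * g a b (n / NN A) * gam A a b hc (n % NN A)) * NN A := by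
  unfold Pif; rw [if_pos hq, if_pos hT]

lemma Pif_case2 {k : ℕ} {A : Profile C} {a b : C}
    {hc : (Fa A a b).card = (Fa A b a).card} {n : ℕ} (hq : Qpred A a b n)
    (hT : ¬ (a ∈ A.ballot (n % NN A) ∧ b ∉ A.ballot (n % NN A)))
    (hT2 : b ∈ A.ballot (n % NN A) ∧ a ∉ A.ballot (n % NN A)) :
    Pif k A a b hc n = betainv A a b hc (n % NN A)
      + idx a b (Equiv.swap a b * g a b (n / NN A)
          * (gam A a b hc (betainv A a b hc (n % NN A)))⁻¹) * NN A := by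
  unfold Pif; rw [if_pos hq, if_neg hT, if_pos hT2]

lemma Pif_case3 {k : ℕ} {A : Profile C} {a b : C}
    {hc : (Fa A a b).card = (Fa A b a).card} {n : ℕ} (hq : Qpred A a b n)
    (hT : ¬ (a ∈ A.ballot (n % NN A) ∧ b ∉ A.ballot (n % NN A)))
    (hT2 : ¬ (b ∈ A.ballot (n % NN A) ∧ a ∉ A.ballot (n % NN A))) :
    Pif k A a b hc n = n % NN A
      + idx a b (Equiv.swap a b * g a b (n / NN A) * Equiv.swap a b) * NN A := by
  unfold Pif; rw [if_pos hq, if_neg hT, if_neg hT2]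

lemma Pif_caseO {k : ℕ} {A : Profile C} {a b : C}
    {hc : (Fa A a b).card = (Fa A b a).card} {n : ℕ} (hq : ¬ Qpred A a b n) :
    Pif k A a b hc n
      = KK A a b * (if Qpred A a b (n % KK A a b) then psiQ k a b (n / KK A a b)
          else psiF k a b (n / KK A a b)) + n % KK A a b := by
  unfold Pif; rw [if_neg hq]

lemma sandwich0 {s x γ : Equiv.Perm C} (hs : s * s = 1) :
    s * (s * x * γ) = x * γ := by
  rw [← mul_assoc s (s * x) γ, ← mul_assoc s s x, hs, one_mul]

lemma sandwich1 {s x γ : Equiv.Perm C} (hs : s * s = 1) :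
    s * (s * x * γ) * γ⁻¹ = x := by
  rw [sandwich0 hs, mul_inv_cancel_right]

lemma sandwich2 {s x γ : Equiv.Perm C} (hs : s * s = 1) :
    s * (s * x * γ⁻¹) * γ = x := by
  rw [sandwich0 hs, inv_mul_cancel_right]

lemma HL_conj {a b : C} {τ γ : Equiv.Perm C} (hτ : τ a = a ∧ τ b = b)
    (hγ : γ a = b ∧ γ b = a) : (Equiv.swap a b * τ * γ) ∈ HL a b := by
  apply mem_HL.mpr
  constructor
  · rw [Equiv.Perm.mul_apply, Equiv.Perm.mul_apply, hγ.1, hτ.2, Equiv.swap_apply_right]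
  · rw [Equiv.Perm.mul_apply, Equiv.Perm.mul_apply, hγ.2, hτ.1, Equiv.swap_apply_left]

lemma gam_inv_fix {A : Profile C} {a b : C} {hc : (Fa A a b).card = (Fa A b a).card}
    {k : ℕ} {w : ℕ} (hval : Valid k A) (hw : w ∈ Fa A a b) :
    (gam A a b hc w)⁻¹ a = b ∧ (gam A a b hc w)⁻¹ b = a := by
  obtain ⟨h1, h2, _⟩ := gam_spec (hc := hc) hval hw
  constructor
  · symm
    rw [Equiv.Perm.eq_inv_iff_eq]
    exact h2
  · symm
    rw [Equiv.Perm.eq_inv_iff_eq]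
    exact h1

lemma slotQ {A : Profile C} {a b : C} {v' : ℕ} (hv' : v' ∈ A.voters) {i' : ℕ}
    (hi' : i' < hh a b) :
    (v' + i' * NN A) / NN A = i' ∧ (v' + i' * NN A) % NN A = v' ∧
      Qpred A a b (v' + i' * NN A) := by
  obtain ⟨h1, h2⟩ := slot_div (NN_pos A) (voters_lt_NN hv') i'
  refine ⟨h1, h2, ⟨?_, ?_⟩⟩
  · rw [h1]; exact hi'
  · rw [h2]; exact hv'

lemma Pif_Q {k : ℕ} {A : Profile C} {a b : C} {hc : (Fa A a b).card = (Fa A b a).card}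
    (hval : Valid k A) {n : ℕ} (hq : Qpred A a b n) :
    Qpred A a b (Pif k A a b hc n) ∧ Pif k A a b hc (Pif k A a b hc n) = n ∧
      (A.ballot (n % NN A)).image ⇑(g a b (n / NN A))
        = ((A.ballot (Pif k A a b hc n % NN A)).image
            ⇑(g a b (Pif k A a b hc n / NN A))).image ⇑(Equiv.swap a b) := by
  have hi : n / NN A < hh a b := hq.1
  have hv : n % NN A ∈ A.voters := hq.2
  have hgi := g_fix hi
  have hss : Equiv.swap a b * Equiv.swap a b = 1 := Equiv.swap_mul_self a b
  have hrec : n % NN A + (n / NN A) * NN A = n := by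
    have h := Nat.div_add_mod n (NN A)
    have hcm : NN A * (n / NN A) = (n / NN A) * NN A := Nat.mul_comm _ _
    omega
  by_cases hT : a ∈ A.ballot (n % NN A) ∧ b ∉ A.ballot (n % NN A)
  · -- case 1
    have hvFa : n % NN A ∈ Fa A a b := by
      rw [Fa, Finset.mem_filter]; exact ⟨hv, hT⟩
    obtain ⟨hga, hgb, hgim⟩ := gam_spec (hc := hc) hval hvFa
    have hσHL : Equiv.swap a b * g a b (n / NN A) * gam A a b hc (n % NN A) ∈ HL a b :=
      HL_conj hgi ⟨hga, hgb⟩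
    have hv'Fb : beta A a b hc (n % NN A) ∈ Fa A b a := beta_mem hvFa
    have hv'mem : beta A a b hc (n % NN A) ∈ A.voters := by
      rw [Fa, Finset.mem_filter] at hv'Fb; exact hv'Fb.1
    have hv'bal : b ∈ A.ballot (beta A a b hc (n % NN A)) ∧
        a ∉ A.ballot (beta A a b hc (n % NN A)) := by
      rw [Fa, Finset.mem_filter] at hv'Fb; exact hv'Fb.2
    have hPif := Pif_case1 (k := k) (hc := hc) hq hT
    obtain ⟨hdiv, hmod, hQout⟩ := slotQ hv'mem (idx_lt hσHL)
    refine ⟨by rw [hPif]; exact hQout, ?_, ?_⟩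
    · rw [hPif]
      have hoT : ¬ (a ∈ A.ballot ((beta A a b hc (n % NN A)
          + idx a b (Equiv.swap a b * g a b (n / NN A) * gam A a b hc (n % NN A)) * NN A) % NN A)
          ∧ b ∉ A.ballot ((beta A a b hc (n % NN A)
          + idx a b (Equiv.swap a b * g a b (n / NN A) * gam A a b hc (n % NN A)) * NN A) % NN A)) := by
        rw [hmod]
        exact fun hx => hv'bal.2 hx.1
      have hoT2 : b ∈ A.ballot ((beta A a b hc (n % NN A)
          + idx a b (Equiv.swap a b * g a b (n / NN A) * gam A a b hc (n % NN A)) * NN A) % NN A)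
          ∧ a ∉ A.ballot ((beta A a b hc (n % NN A)
          + idx a b (Equiv.swap a b * g a b (n / NN A) * gam A a b hc (n % NN A)) * NN A) % NN A) := by
        rw [hmod]
        exact hv'bal
      rw [Pif_case2 hQout hoT hoT2, hmod, hdiv, betainv_beta hvFa, g_idx hσHL,
        sandwich1 hss, idx_g hi]
      exact hrec
    · rw [hPif, hmod, hdiv, g_idx hσHL, ← image_mul, sandwich0 hss, image_mul, hgim]
  · by_cases hT2 : b ∈ A.ballot (n % NN A) ∧ a ∉ A.ballot (n % NN A)
    · -- case 2
      have hvFb : n % NN A ∈ Fa A b a := by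
        rw [Fa, Finset.mem_filter]; exact ⟨hv, hT2⟩
      have hwFa : betainv A a b hc (n % NN A) ∈ Fa A a b := betainv_mem hvFb
      have hbw : beta A a b hc (betainv A a b hc (n % NN A)) = n % NN A := beta_betainv hvFb
      obtain ⟨hga, hgb, hgim⟩ := gam_spec (hc := hc) hval hwFa
      have hσHL : Equiv.swap a b * g a b (n / NN A)
          * (gam A a b hc (betainv A a b hc (n % NN A)))⁻¹ ∈ HL a b :=
        HL_conj hgi (gam_inv_fix hval hwFa)
      have hwmem : betainv A a b hc (n % NN A) ∈ A.voters := by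
        rw [Fa, Finset.mem_filter] at hwFa; exact hwFa.1
      have hwbal : a ∈ A.ballot (betainv A a b hc (n % NN A)) ∧
          b ∉ A.ballot (betainv A a b hc (n % NN A)) := by
        rw [Fa, Finset.mem_filter] at hwFa; exact hwFa.2
      have hPif := Pif_case2 (k := k) (hc := hc) hq hT hT2
      obtain ⟨hdiv, hmod, hQout⟩ := slotQ hwmem (idx_lt hσHL)
      refine ⟨by rw [hPif]; exact hQout, ?_, ?_⟩
      · rw [hPif]
        have hoT : a ∈ A.ballot ((betainv A a b hc (n % NN A)
            + idx a b (Equiv.swap a b * g a b (n / NN A)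
              * (gam A a b hc (betainv A a b hc (n % NN A)))⁻¹) * NN A) % NN A)
            ∧ b ∉ A.ballot ((betainv A a b hc (n % NN A)
            + idx a b (Equiv.swap a b * g a b (n / NN A)
              * (gam A a b hc (betainv A a b hc (n % NN A)))⁻¹) * NN A) % NN A) := by
          rw [hmod]
          exact hwbal
        rw [Pif_case1 hQout hoT, hmod, hdiv, hbw, g_idx hσHL, sandwich2 hss, idx_g hi]
        exact hrec
      · rw [hPif, hmod, hdiv, g_idx hσHL, ← image_mul, sandwich0 hss, image_mul,
          image_inv_eq hgim, hbw]
    · -- case 3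
      have himg : (A.ballot (n % NN A)).image ⇑(Equiv.swap a b) = A.ballot (n % NN A) := by
        by_cases hav : a ∈ A.ballot (n % NN A)
        · have hbv : b ∈ A.ballot (n % NN A) := by
            by_contra h
            exact hT ⟨hav, h⟩
          exact image_swap_mem hav hbv
        · have hbv : b ∉ A.ballot (n % NN A) := fun h => hT2 ⟨h, hav⟩
          exact image_swap_not_mem hav hbv
      have hσHL : Equiv.swap a b * g a b (n / NN A) * Equiv.swap a b ∈ HL a b :=
        HL_conj hgi ⟨Equiv.swap_apply_left a b, Equiv.swap_apply_right a b⟩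
      have hPif := Pif_case3 (k := k) (hc := hc) hq hT hT2
      obtain ⟨hdiv, hmod, hQout⟩ := slotQ hv (idx_lt hσHL)
      have hsand3 : Equiv.swap a b * (Equiv.swap a b * g a b (n / NN A) * Equiv.swap a b)
          * Equiv.swap a b = g a b (n / NN A) := by
        have h5 := sandwich1 (γ := Equiv.swap a b) (x := g a b (n / NN A)) hss
        rwa [Equiv.swap_inv] at h5
      refine ⟨by rw [hPif]; exact hQout, ?_, ?_⟩
      · rw [hPif]
        have hoT : ¬ (a ∈ A.ballot ((n % NN A
            + idx a b (Equiv.swap a b * g a b (n / NN A) * Equiv.swap a b) * NN A) % NN A)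
            ∧ b ∉ A.ballot ((n % NN A
            + idx a b (Equiv.swap a b * g a b (n / NN A) * Equiv.swap a b) * NN A) % NN A)) := by
          rw [hmod]
          exact hT
        have hoT2 : ¬ (b ∈ A.ballot ((n % NN A
            + idx a b (Equiv.swap a b * g a b (n / NN A) * Equiv.swap a b) * NN A) % NN A)
            ∧ a ∉ A.ballot ((n % NN A
            + idx a b (Equiv.swap a b * g a b (n / NN A) * Equiv.swap a b) * NN A) % NN A)) := by
          rw [hmod]
          exact hT2
        rw [Pif_case3 hQout hoT hoT2, hmod, hdiv, g_idx hσHL, hsand3, idx_g hi]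
        exact hrec
      · rw [hPif, hmod, hdiv, g_idx hσHL, ← image_mul, sandwich0 hss, image_mul, himg]

lemma image_swap_swap {a b : C} (S : Finset C) :
    (S.image ⇑(Equiv.swap a b)).image ⇑(Equiv.swap a b) = S := by
  have h := image_inv_eq (σ := Equiv.swap a b) (S := S) rfl
  rwa [Equiv.swap_inv] at h

lemma Pif_nQ {k : ℕ} {A : Profile C} {a b : C} {hc : (Fa A a b).card = (Fa A b a).card}
    (hm : 0 < mm (C := C) k) {n : ℕ} (hq : ¬ Qpred A a b n) :
    ¬ Qpred A a b (Pif k A a b hc n) ∧ Pif k A a b hc (Pif k A a b hc n) = n ∧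
      pat k A a b n = (pat k A a b (Pif k A a b hc n)).image ⇑(Equiv.swap a b) ∧
      (n ∈ (Zp k A a b).voters → Pif k A a b hc n ∈ (Zp k A a b).voters) := by
  have hrK : n % KK A a b < KK A a b := Nat.mod_lt _ (KK_pos A a b)
  have hd : KK A a b * (n / KK A a b) + n % KK A a b = n := Nat.div_add_mod _ _
  by_cases hqr : Qpred A a b (n % KK A a b)
  · -- psiQ branch
    have hB1 : 1 ≤ n / KK A a b := by
      rcases Nat.eq_zero_or_pos (n / KK A a b) with h | h
      · exfalso
        rw [h, Nat.mul_zero, Nat.zero_add] at hd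
        rw [hd] at hqr
        exact hq hqr
      · exact h
    obtain ⟨hψ1, hψmod, hψinv⟩ := psiQ_spec k a b hm hB1
    have hPif : Pif k A a b hc n = KK A a b * psiQ k a b (n / KK A a b) + n % KK A a b := by
      rw [Pif_caseO hq, if_pos hqr]
    have hdivout : (KK A a b * psiQ k a b (n / KK A a b) + n % KK A a b) / KK A a b
        = psiQ k a b (n / KK A a b) := by
      rw [Nat.mul_add_div (KK_pos A a b), Nat.div_eq_of_lt hrK, Nat.add_zero]
    have hmodout : (KK A a b * psiQ k a b (n / KK A a b) + n % KK A a b) % KK A a b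
        = n % KK A a b := by
      rw [Nat.mul_add_mod, Nat.mod_eq_of_lt hrK]
    have houtge : KK A a b ≤ KK A a b * psiQ k a b (n / KK A a b) + n % KK A a b := by
      have h1 : KK A a b ≤ KK A a b * psiQ k a b (n / KK A a b) :=
        Nat.le_mul_of_pos_right _ hψ1
      omega
    have hnQout : ¬ Qpred A a b (Pif k A a b hc n) := by
      rw [hPif]
      exact not_Qpred_of_ge houtge
    refine ⟨hnQout, ?_, ?_, ?_⟩
    · rw [hPif] at hnQout ⊢
      rw [Pif_caseO hnQout, hmodout, if_pos hqr, hdivout, hψinv, hd]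
    · rw [hPif, pat_eq _ hm, pat_eq _ hm]
      have harg : (⟨(KK A a b * psiQ k a b (n / KK A a b) + n % KK A a b) / KK A a b
            % mm (C := C) k, Nat.mod_lt _ hm⟩ : Fin (mm (C := C) k))
          = ⟨sstar k (Equiv.swap a b) (n / KK A a b % mm (C := C) k),
              sstar_lt _ (Nat.mod_lt _ hm)⟩ := by
        apply Fin.ext
        simp only
        rw [hdivout, hψmod]
        rfl
      rw [harg, ee_sstar (Equiv.swap a b) (Nat.mod_lt _ hm), image_swap_swap]
    · intro hZ
      exfalso
      rw [mem_Zp_voters] at hZ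
      obtain ⟨j, hj, rfl⟩ := hZ
      obtain ⟨hjd, hjm⟩ := Zp_slot_div (k := k) (A := A) (a := a) (b := b) j
      rw [hjm] at hqr
      have : ¬ Qpred A a b (hh a b * NN A) := by
        intro hcon
        have h2 : hh a b * NN A / NN A = hh a b := Nat.mul_div_cancel _ (NN_pos A)
        have := hcon.1
        rw [h2] at this
        omega
      exact this hqr
  · -- psiF branch
    have hPif : Pif k A a b hc n = KK A a b * psiF k a b (n / KK A a b) + n % KK A a b := by
      rw [Pif_caseO hq, if_neg hqr]
    have hdivout : (KK A a b * psiF k a b (n / KK A a b) + n % KK A a b) / KK A a b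
        = psiF k a b (n / KK A a b) := by
      rw [Nat.mul_add_div (KK_pos A a b), Nat.div_eq_of_lt hrK, Nat.add_zero]
    have hmodout : (KK A a b * psiF k a b (n / KK A a b) + n % KK A a b) % KK A a b
        = n % KK A a b := by
      rw [Nat.mul_add_mod, Nat.mod_eq_of_lt hrK]
    have hnQout : ¬ Qpred A a b (Pif k A a b hc n) := by
      rw [hPif]
      intro hqo
      have h1 := Qpred_lt hqo
      rcases Nat.eq_zero_or_pos (psiF k a b (n / KK A a b)) with h0 | hpos
      · rw [h0, Nat.mul_zero, Nat.zero_add] at hqo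
        exact hqr hqo
      · have h2 : KK A a b ≤ KK A a b * psiF k a b (n / KK A a b) :=
          Nat.le_mul_of_pos_right _ hpos
        omega
    refine ⟨hnQout, ?_, ?_, ?_⟩
    · rw [hPif] at hnQout ⊢
      rw [Pif_caseO hnQout, hmodout, if_neg hqr, hdivout, psiF_invol, hd]
    · rw [hPif, pat_eq _ hm, pat_eq _ hm]
      have harg : (⟨(KK A a b * psiF k a b (n / KK A a b) + n % KK A a b) / KK A a b
            % mm (C := C) k, Nat.mod_lt _ hm⟩ : Fin (mm (C := C) k))
          = ⟨sstar k (Equiv.swap a b) (n / KK A a b % mm (C := C) k),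
              sstar_lt _ (Nat.mod_lt _ hm)⟩ := by
        apply Fin.ext
        simp only
        rw [hdivout, (psiF_div k a b hm).2]
        rfl
      rw [harg, ee_sstar (Equiv.swap a b) (Nat.mod_lt _ hm), image_swap_swap]
    · intro hZ
      rw [mem_Zp_voters] at hZ ⊢
      obtain ⟨j, hj, rfl⟩ := hZ
      obtain ⟨hjd, hjm⟩ := Zp_slot_div (k := k) (A := A) (a := a) (b := b) j
      have hψj : psiF k a b ((KK A a b * j + hh a b * NN A) / KK A a b) = tst k a b j := by
        rw [hjd, psiF, Nat.div_eq_of_lt hj, Nat.mul_zero, Nat.zero_add, Nat.mod_eq_of_lt hj]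
      refine ⟨tst k a b j, tst_lt a b hj, ?_⟩
      rw [hPif, hψj, hjm]

lemma mkP_voters_mem {k : ℕ} {A : Profile C} {a b : C} :
    ∀ c i, i + c ≤ hh a b → ∀ n,
      (n ∈ (mkP k A a b c i).voters ↔
        ((i ≤ n / NN A ∧ n / NN A < i + c ∧ n % NN A ∈ A.voters)
          ∨ n ∈ (Zp k A a b).voters)) := by
  intro c
  induction c with
  | zero =>
    intro i _ n
    rw [mkP_zero]
    constructor
    · exact fun h => Or.inr h
    · rintro (⟨h1, h2, _⟩ | h)
      · omega
      · exact h
  | succ c ih =>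
    intro i hi n
    rw [mkP_succ]
    show n ∈ (cpy A (g a b i) i).voters ∪ (mkP k A a b c (i+1)).voters ↔ _
    rw [Finset.mem_union, mem_cpy_voters, ih (i+1) (by omega) n]
    constructor
    · rintro (⟨h1, h2⟩ | (⟨h1, h2, h3⟩ | hz))
      · exact Or.inl ⟨by omega, by omega, h2⟩
      · exact Or.inl ⟨by omega, by omega, h3⟩
      · exact Or.inr hz
    · rintro (⟨h1, h2, h3⟩ | hz)
      · by_cases hii : n / NN A = i
        · exact Or.inl ⟨hii, h3⟩
        · exact Or.inr (Or.inl ⟨by omega, by omega, h3⟩)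
      · exact Or.inr (Or.inr hz)

lemma P_voters_mem {k : ℕ} {A : Profile C} {a b : C} (n : ℕ) :
    n ∈ (mkP k A a b (hh a b) 0).voters
      ↔ (Qpred A a b n ∨ n ∈ (Zp k A a b).voters) := by
  rw [mkP_voters_mem (hh a b) 0 (by omega) n]
  constructor
  · rintro (⟨h1, h2, h3⟩ | hz)
    · exact Or.inl ⟨by omega, h3⟩
    · exact Or.inr hz
  · rintro (⟨h1, h2⟩ | hz)
    · exact Or.inl ⟨Nat.zero_le _, by have := h1; omega, h2⟩
    · exact Or.inr hz

lemma P_ballot_eq {k : ℕ} {A : Profile C} {a b : C} (n : ℕ) :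
    (mkP k A a b (hh a b) 0).ballot n
      = if Qpred A a b n then (A.ballot (n % NN A)).image ⇑(g a b (n / NN A))
        else pat k A a b n := by
  rw [mkP_ballot (hh a b) 0 (by omega) n]
  by_cases hq : Qpred A a b n
  · rw [if_pos ⟨Nat.zero_le _, by have := hq.1; omega, hq.2⟩, if_pos hq]
  · rw [if_neg (fun hcon => hq ⟨by have := hcon.2.1; omega, hcon.2.2⟩), if_neg hq]

lemma Pif_invol {k : ℕ} {A : Profile C} {a b : C} {hc : (Fa A a b).card = (Fa A b a).card}
    (hval : Valid k A) (hm : 0 < mm (C := C) k) :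
    Function.Involutive (Pif k A a b hc) := by
  intro n
  by_cases hq : Qpred A a b n
  · exact (Pif_Q hval hq).2.1
  · exact (Pif_nQ hm hq).2.1

lemma Pif_closure {k : ℕ} {A : Profile C} {a b : C}
    {hc : (Fa A a b).card = (Fa A b a).card}
    (hval : Valid k A) (hm : 0 < mm (C := C) k) {n : ℕ}
    (hn : n ∈ (mkP k A a b (hh a b) 0).voters) :
    Pif k A a b hc n ∈ (mkP k A a b (hh a b) 0).voters := by
  rw [P_voters_mem] at hn ⊢
  by_cases hq : Qpred A a b n
  · exact Or.inl (Pif_Q hval hq).1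
  · rcases hn with hq' | hz
    · exact absurd hq' hq
    · exact Or.inr ((Pif_nQ hm hq).2.2.2 hz)

lemma P_fix {k : ℕ} {A : Profile C} {a b : C} (hval : Valid k A)
    (hc : (Fa A a b).card = (Fa A b a).card) (hm : 0 < mm (C := C) k) :
    Profile.permVoters (Function.Involutive.toPerm (Pif k A a b hc) (Pif_invol hval hm))
        (Profile.mapCand (Equiv.swap a b) (mkP k A a b (hh a b) 0))
      = mkP k A a b (hh a b) 0 := by
  apply profile_ext
  · show ((mkP k A a b (hh a b) 0).voters).map _ = (mkP k A a b (hh a b) 0).voters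
    ext n
    rw [Finset.mem_map_equiv]
    show Pif k A a b hc n ∈ _ ↔ _
    constructor
    · intro h
      have h2 := Pif_closure (hc := hc) hval hm h
      rwa [Pif_invol hval hm n] at h2
    · exact fun h => Pif_closure hval hm h
  · funext n
    show ((mkP k A a b (hh a b) 0).ballot (Pif k A a b hc n)).image ⇑(Equiv.swap a b)
      = (mkP k A a b (hh a b) 0).ballot n
    rw [P_ballot_eq, P_ballot_eq]
    by_cases hq : Qpred A a b n
    · rw [if_pos (Pif_Q hval hq).1, if_pos hq]
      exact ((Pif_Q (hc := hc) hval hq).2.2).symm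
    · rw [if_neg (Pif_nQ (hc := hc) hm hq).1, if_neg hq]
      exact ((Pif_nQ (hc := hc) hm hq).2.2.1).symm

end ESET

section MainProof
variable {C : Type} [Fintype C] [DecidableEq C]
open ESET

lemma main_impl (k : ℕ) (hk2 : k < Fintype.card C)
    (F : Profile C → Finset C)
    (hne : ∀ A, Valid k A → (F A).Nonempty)
    (hanon : ∀ A (π : Equiv.Perm ℕ), Valid k A → F (Profile.permVoters π A) = F A)
    (hneut : ∀ A (τ : Equiv.Perm C), Valid k A → F (Profile.mapCand τ A) = (F A).image τ)
    (hcons : ∀ A A', Valid k A → Valid k A' → A.Disj A' →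
      (F A ∩ F A').Nonempty → F (A.combine A') = F A ∩ F A')
    (A : Profile C) (hA : Valid k A) (a b : C)
    (hs : appScore A a = appScore A b) (ha : a ∈ F A) : b ∈ F A := by
  have hm : 0 < mm (C := C) k := mm_pos (le_of_lt hk2)
  have hc : (Fa A a b).card = (Fa A b a).card := score_card hs
  obtain ⟨haP, hsub⟩ := F_mkP k A a b F hne hanon hneut hcons hA hm ha (hh a b) 0 (by omega)
  have hPval : Valid k (mkP k A a b (hh a b) 0) := mkP_valid hA hm (hh a b) 0 (by omega)
  have hfix := P_fix (k := k) hA hc hm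
  have h1 : F (Profile.mapCand (Equiv.swap a b) (mkP k A a b (hh a b) 0))
      = F (mkP k A a b (hh a b) 0) := by
    conv_rhs => rw [← hfix]
    rw [hanon _ _ (valid_mapCand hPval _)]
  have h2 := hneut (mkP k A a b (hh a b) 0) (Equiv.swap a b) hPval
  have hbP : b ∈ F (mkP k A a b (hh a b) 0) := by
    have h3 : b ∈ (F (mkP k A a b (hh a b) 0)).image ⇑(Equiv.swap a b) :=
      Finset.mem_image.mpr ⟨a, haP, Equiv.swap_apply_left a b⟩
    rw [← h2, h1] at h3
    exact h3
  have h1mem : (1 : Equiv.Perm C) ∈ HL a b := one_mem_HL a b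
  have hb2 := hsub b hbP (idx a b 1) (Nat.zero_le _)
    (by rw [Nat.zero_add]; exact idx_lt h1mem)
  rw [g_idx h1mem] at hb2
  obtain ⟨y, hy, hyb⟩ := Finset.mem_image.mp hb2
  rw [Equiv.Perm.one_apply] at hyb
  rwa [← hyb]

end MainProof

theorem equal_score_equal_treatment' (k : ℕ)
    (hk1 : 1 ≤ k) (hk2 : k < Fintype.card C)
    (F : Profile C → Finset C)
    (hne : ∀ A, Valid k A → (F A).Nonempty)
    (hanon : ∀ A (π : Equiv.Perm ℕ), Valid k A → F (Profile.permVoters π A) = F A)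
    (hneut : ∀ A (τ : Equiv.Perm C), Valid k A → F (Profile.mapCand τ A) = (F A).image τ)
    (hcons : ∀ A A', Valid k A → Valid k A' → A.Disj A' →
      (F A ∩ F A').Nonempty → F (A.combine A') = F A ∩ F A') :
    ∀ A, Valid k A → ∀ a b : C, appScore A a = appScore A b → (a ∈ F A ↔ b ∈ F A) := by
  intro A hA a b hs
  exact ⟨fun ha => main_impl k hk2 F hne hanon hneut hcons A hA a b hs ha,
    fun hb => main_impl k hk2 F hne hanon hneut hcons A hA b a hs.symm hb⟩



/-- For an anonymous, neutral, and consistent social choice function on size-`k` ballots,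
candidates with equal approval scores are chosen or unchosen together. -/
theorem equal_score_equal_treatment (k : ℕ)
    (hk1 : 1 ≤ k) (hk2 : k < Fintype.card C)
    (F : Profile C → Finset C)
    (hne : ∀ A, Valid k A → (F A).Nonempty)
    (hanon : ∀ A (π : Equiv.Perm ℕ), Valid k A → F (Profile.permVoters π A) = F A)
    (hneut : ∀ A (τ : Equiv.Perm C), Valid k A → F (Profile.mapCand τ A) = (F A).image τ)
    (hcons : ∀ A A', Valid k A → Valid k A' → A.Disj A' →
      (F A ∩ F A').Nonempty → F (A.combine A') = F A ∩ F A') :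
    ∀ A, Valid k A → ∀ a b : C, appScore A a = appScore A b → (a ∈ F A ↔ b ∈ F A) := by
  exact equal_score_equal_treatment' k hk1 hk2 F hne hanon hneut hcons
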